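/- Let 𝓕 be a complete polyhedral fan in ℝ^n and let δ > 0. Then there exists d = (d_0, d_1, ..., d_{n−1}) ∈ ℝ^n_{>0} such that the quasi-toric differential inclusion given by 𝓕 and d is well-defined, and for every X ∈ ℝ^n the following holds: if C ∈ 𝓕 is a cone such that either (a) dim(C) = l ≤ n−1, dist(X, C) ≤ d_l, and dist(X, C') > d_{dim(C')} for every cone C' ∈ 𝓕 with dim(C') < l, or (b) dim(C) = n, X ∈ C, and dist(X, C') > d_{dim(C')} for every cone C' ∈ 𝓕 with dim(C') ≤ n−1, then F_{𝓕,δ}(X) ⊆ C^o, i.e., the toric differential inclusion given by 𝓕 and δ is embedded in the quasi-toric differential inclusion given by 𝓕 and d. -/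

import Mathlib

set_option linter.unusedSectionVars false
set_option linter.unusedVariables false
open scoped RealInnerProductSpace Classical
open Metric Set

noncomputable section Aux

variable {E : Type*} [NormedAddCommGroup E] [InnerProductSpace ℝ E] [FiniteDimensional ℝ E]

/-- cone generated by an indexed finite family -/
def coneInd {ι : Type*} [Fintype ι] (v : ι → E) : Set E :=
  {x | ∃ lam : ι → ℝ, (∀ i, 0 ≤ lam i) ∧ x = ∑ i, lam i • v i}

/-- cone generated by a finite set of vectors -/
def coneVec (s : Finset E) : Set E :=
  {x | ∃ f : E → ℝ, (∀ w, 0 ≤ f w) ∧ x = ∑ w ∈ s, f w • w}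

lemma zero_mem_coneInd {ι : Type*} [Fintype ι] (v : ι → E) : (0:E) ∈ coneInd v :=
  ⟨0, fun _ => le_rfl, by simp⟩

lemma zero_mem_coneVec (s : Finset E) : (0:E) ∈ coneVec s :=
  ⟨0, fun _ => le_rfl, by simp⟩

lemma coneInd_add {ι : Type*} [Fintype ι] {v : ι → E} {x y : E}
    (hx : x ∈ coneInd v) (hy : y ∈ coneInd v) : x + y ∈ coneInd v := by
  obtain ⟨f, hf, rfl⟩ := hx; obtain ⟨g, hg, rfl⟩ := hy
  exact ⟨f + g, fun i => add_nonneg (hf i) (hg i), by simp [add_smul, Finset.sum_add_distrib]⟩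

lemma coneInd_smul {ι : Type*} [Fintype ι] {v : ι → E} {c : ℝ} {x : E}
    (hc : 0 ≤ c) (hx : x ∈ coneInd v) : c • x ∈ coneInd v := by
  obtain ⟨f, hf, rfl⟩ := hx
  exact ⟨c • f, fun i => mul_nonneg hc (hf i), by simp [Finset.smul_sum, smul_smul]⟩

lemma coneVec_add {s : Finset E} {x y : E}
    (hx : x ∈ coneVec s) (hy : y ∈ coneVec s) : x + y ∈ coneVec s := by
  obtain ⟨f, hf, rfl⟩ := hx; obtain ⟨g, hg, rfl⟩ := hy
  exact ⟨f + g, fun i => add_nonneg (hf i) (hg i), by simp [add_smul, Finset.sum_add_distrib]⟩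

lemma coneVec_smul {s : Finset E} {c : ℝ} {x : E}
    (hc : 0 ≤ c) (hx : x ∈ coneVec s) : c • x ∈ coneVec s := by
  obtain ⟨f, hf, rfl⟩ := hx
  exact ⟨c • f, fun i => mul_nonneg hc (hf i), by simp [Finset.smul_sum, smul_smul]⟩

lemma mem_coneInd_self {ι : Type*} [Fintype ι] (v : ι → E) (i : ι) : v i ∈ coneInd v := by
  refine ⟨fun j => if j = i then 1 else 0, fun j => by positivity, ?_⟩
  simp [ite_smul]

lemma mem_coneVec_self {s : Finset E} {w : E} (hw : w ∈ s) : w ∈ coneVec s := by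
  refine ⟨fun u => if u = w then 1 else 0, fun u => by positivity, ?_⟩
  simp [ite_smul, Finset.sum_ite_eq' s w, hw]

lemma coneInd_subset {ι : Type*} [Fintype ι] {v : ι → E} {C : Set E}
    (h0 : (0:E) ∈ C) (hadd : ∀ x ∈ C, ∀ y ∈ C, x + y ∈ C)
    (hsmul : ∀ (c : ℝ), 0 ≤ c → ∀ x ∈ C, c • x ∈ C)
    (hg : ∀ i, v i ∈ C) : coneInd v ⊆ C := by
  rintro x ⟨f, hf, rfl⟩
  exact Finset.sum_induction _ (· ∈ C) (fun a b ha hb => hadd a ha b hb) h0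
    (fun i _ => hsmul (f i) (hf i) (v i) (hg i))

lemma coneVec_subset {s : Finset E} {C : Set E}
    (h0 : (0:E) ∈ C) (hadd : ∀ x ∈ C, ∀ y ∈ C, x + y ∈ C)
    (hsmul : ∀ (c : ℝ), 0 ≤ c → ∀ x ∈ C, c • x ∈ C)
    (hg : ∀ w ∈ s, w ∈ C) : coneVec s ⊆ C := by
  rintro x ⟨f, hf, rfl⟩
  exact Finset.sum_induction _ (· ∈ C) (fun a b ha hb => hadd a ha b hb) h0
    (fun w hw => hsmul (f w) (hf w) w (hg w hw))

lemma coneInd_eq_coneVec {ι : Type*} [Fintype ι] (v : ι → E) :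
    coneInd v = coneVec (Finset.image v Finset.univ) := by
  apply Set.Subset.antisymm
  · exact coneInd_subset (zero_mem_coneVec _) (fun x hx y hy => coneVec_add hx hy)
      (fun c hc x hx => coneVec_smul hc hx)
      (fun i => mem_coneVec_self (Finset.mem_image_of_mem v (Finset.mem_univ i)))
  · refine coneVec_subset (zero_mem_coneInd _) (fun x hx y hy => coneInd_add hx hy)
      (fun c hc x hx => coneInd_smul hc hx) ?_
    intro w hw
    obtain ⟨i, _, rfl⟩ := Finset.mem_image.mp hw
    exact mem_coneInd_self v i

lemma coneVec_eq_coneInd (s : Finset E) :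
    coneVec s = coneInd (fun i : {x // x ∈ s} => (i : E)) := by
  apply Set.Subset.antisymm
  · exact coneVec_subset (zero_mem_coneInd _) (fun x hx y hy => coneInd_add hx hy)
      (fun c hc x hx => coneInd_smul hc hx)
      (fun w hw => mem_coneInd_self (fun i : {x // x ∈ s} => (i : E)) ⟨w, hw⟩)
  · exact coneInd_subset (zero_mem_coneVec _) (fun x hx y hy => coneVec_add hx hy)
      (fun c hc x hx => coneVec_smul hc hx)
      (fun i => mem_coneVec_self i.2)

lemma coneInd_reindex {ι κ : Type*} [Fintype ι] [Fintype κ] (e : κ ≃ ι) (v : ι → E) :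
    coneInd (v ∘ e) = coneInd v := by
  ext x
  constructor
  · rintro ⟨f, hf, rfl⟩
    refine ⟨f ∘ e.symm, fun i => hf _, ?_⟩
    rw [← Equiv.sum_comp e (fun i => (f ∘ e.symm) i • v i)]
    simp
  · rintro ⟨f, hf, rfl⟩
    refine ⟨f ∘ e, fun i => hf _, ?_⟩
    rw [← Equiv.sum_comp e (fun i => f i • v i)]
    simp

lemma coneInd_toFin {ι : Type*} [Fintype ι] (v : ι → E) :
    ∃ (k : ℕ) (w : Fin k → E), coneInd v = coneInd w := by
  refine ⟨Fintype.card ι, v ∘ (Fintype.equivFin ι).symm, ?_⟩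
  rw [coneInd_reindex (Fintype.equivFin ι).symm v]

lemma coneVec_mono {s t : Finset E} (h : s ⊆ t) : coneVec s ⊆ coneVec t :=
  coneVec_subset (zero_mem_coneVec _) (fun x hx y hy => coneVec_add hx hy)
    (fun c hc x hx => coneVec_smul hc hx) (fun w hw => mem_coneVec_self (h hw))

lemma coneInd_convex {ι : Type*} [Fintype ι] (v : ι → E) : Convex ℝ (coneInd v) := by
  intro x hx y hy a b ha hb _
  exact coneInd_add (coneInd_smul ha hx) (coneInd_smul hb hy)


/-- Conic Carathéodory: every element of a finitely generated cone lies in the cone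
generated by a linearly independent subset of the generators. -/
lemma coneVec_caratheodory (s : Finset E) :
    ∀ x ∈ coneVec s, ∃ t ⊆ s,
      LinearIndependent ℝ (fun v : {x // x ∈ t} => (v : E)) ∧ x ∈ coneVec t := by
  induction s using Finset.strongInductionOn with
  | _ s IH =>
  intro x hx
  by_cases hind : LinearIndependent ℝ (fun v : {x // x ∈ s} => (v : E))
  · exact ⟨s, Finset.Subset.refl s, hind, hx⟩
  obtain ⟨g0, hg0sum, i0, hi0⟩ := Fintype.not_linearIndependent_iff.mp hind
  -- produce a dependency with a positive coefficient somewhere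
  obtain ⟨g, hgsum, w₀, hw₀s, hw₀pos⟩ :
      ∃ g : E → ℝ, (∑ w ∈ s, g w • w = 0) ∧ ∃ w ∈ s, 0 < g w := by
    by_cases hpos : ∃ i : {x // x ∈ s}, 0 < g0 i
    · obtain ⟨i, hi⟩ := hpos
      refine ⟨fun w => if h : w ∈ s then g0 ⟨w, h⟩ else 0, ?_, (i : E), i.2, by simpa using hi⟩
      rw [← Finset.sum_coe_sort s (fun w => (if h : w ∈ s then g0 ⟨w, h⟩ else 0) • w)]
      simpa using hg0sum
    · push_neg at hpos
      refine ⟨fun w => if h : w ∈ s then -g0 ⟨w, h⟩ else 0, ?_, (i0 : E), i0.2, ?_⟩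
      · rw [← Finset.sum_coe_sort s (fun w => (if h : w ∈ s then -g0 ⟨w, h⟩ else 0) • w)]
        have he : ∀ i : {x // x ∈ s}, (if h : (i:E) ∈ s then -g0 ⟨(i:E), h⟩ else 0) • (i:E)
            = -(g0 i • (i:E)) := fun i => by rw [dif_pos i.2, Subtype.coe_eta, neg_smul]
        rw [Finset.sum_congr rfl (fun i _ => he i), Finset.sum_neg_distrib, hg0sum, neg_zero]
      · have := lt_of_le_of_ne (hpos i0) hi0
        simp only [dif_pos i0.2, Subtype.coe_eta]
        linarith
  obtain ⟨f, hf, hxe⟩ := hx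
  set P := s.filter (fun w => 0 < g w) with hP
  have hPne : P.Nonempty := ⟨w₀, Finset.mem_filter.mpr ⟨hw₀s, hw₀pos⟩⟩
  obtain ⟨w₁, hw₁P, hmin⟩ := Finset.exists_min_image P (fun w => f w / g w) hPne
  have hw₁s : w₁ ∈ s := (Finset.mem_filter.mp hw₁P).1
  have hgw₁ : 0 < g w₁ := (Finset.mem_filter.mp hw₁P).2
  set r := f w₁ / g w₁ with hr
  have hr0 : 0 ≤ r := div_nonneg (hf w₁) hgw₁.le
  set f' : E → ℝ := fun w => if w ∈ s then f w - r * g w else 0 with hf'def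
  have hf' : ∀ w, 0 ≤ f' w := by
    intro w
    simp only [hf'def]
    split_ifs with hws
    · by_cases hgw : 0 < g w
      · have hwP : w ∈ P := Finset.mem_filter.mpr ⟨hws, hgw⟩
        have := hmin w hwP
        rw [hr, le_div_iff₀ hgw] at this
        linarith
      · push_neg at hgw
        have : r * g w ≤ 0 := mul_nonpos_of_nonneg_of_nonpos hr0 hgw
        have := hf w
        linarith
    · exact le_rfl
  have hsum0 : ∑ w ∈ s, (r * g w) • w = 0 := by
    have : ∑ w ∈ s, (r * g w) • w = r • ∑ w ∈ s, g w • w := by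
      rw [Finset.smul_sum]
      exact Finset.sum_congr rfl fun w _ => (smul_smul r (g w) w).symm
    rw [this, hgsum, smul_zero]
  have hx' : x = ∑ w ∈ s, f' w • w := by
    have h1 : ∑ w ∈ s, f' w • w = ∑ w ∈ s, ((f w • w) - (r * g w) • w) := by
      refine Finset.sum_congr rfl fun w hws => ?_
      simp only [hf'def, if_pos hws, sub_smul]
    rw [h1, Finset.sum_sub_distrib, hsum0, sub_zero, hxe]
  have hfw₁ : f' w₁ = 0 := by
    simp only [hf'def, if_pos hw₁s, hr]
    rw [div_mul_cancel₀ (f w₁) hgw₁.ne']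
    ring
  have hxerase : x ∈ coneVec (s.erase w₁) := by
    refine ⟨f', hf', ?_⟩
    rw [Finset.sum_erase _ (by rw [hfw₁, zero_smul])]
    exact hx'
  obtain ⟨t, hts, hind', hxt⟩ := IH (s.erase w₁) (Finset.erase_ssubset hw₁s) x hxerase
  exact ⟨t, hts.trans (Finset.erase_subset _ _), hind', hxt⟩

/-- The linear map sending coefficients to the corresponding combination. -/
def combMap (t : Finset E) : ({x // x ∈ t} → ℝ) →ₗ[ℝ] E where
  toFun f := ∑ i : {x // x ∈ t}, f i • (i : E)
  map_add' f g := by simp [add_smul, Finset.sum_add_distrib]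
  map_smul' c f := by simp [Finset.smul_sum, smul_smul]

lemma combMap_apply (t : Finset E) (f : ({x // x ∈ t} → ℝ)) :
    combMap t f = ∑ i : {x // x ∈ t}, f i • (i : E) := rfl

lemma coneVec_isClosed_of_indep {t : Finset E}
    (h : LinearIndependent ℝ (fun v : {x // x ∈ t} => (v : E))) : IsClosed (coneVec t) := by
  have hker : LinearMap.ker (combMap (E := E) t) = ⊥ := by
    rw [LinearMap.ker_eq_bot']
    intro f hf
    funext i
    exact Fintype.linearIndependent_iff.mp h f hf i
  have hemb := LinearMap.isClosedEmbedding_of_injective hker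
  have horth : IsClosed {f : {x // x ∈ t} → ℝ | ∀ i, 0 ≤ f i} := by
    have he : {f : {x // x ∈ t} → ℝ | ∀ i, 0 ≤ f i} = ⋂ i, {f | 0 ≤ f i} := by
      ext f; simp [Set.mem_iInter]
    rw [he]
    exact isClosed_iInter fun i => isClosed_le continuous_const (continuous_apply i)
  have him : coneVec t = (combMap t) '' {f | ∀ i, 0 ≤ f i} := by
    ext x
    constructor
    · rintro ⟨f, hf, rfl⟩
      refine ⟨fun i => f i, fun i => hf _, ?_⟩
      rw [combMap_apply]
      exact Finset.sum_coe_sort t (fun w => f w • w)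
    · rintro ⟨f, hf, rfl⟩
      refine ⟨fun w => if h : w ∈ t then f ⟨w, h⟩ else 0,
        fun w => by dsimp only; split_ifs; exacts [hf _, le_rfl], ?_⟩
      rw [combMap_apply,
        ← Finset.sum_coe_sort t (fun w => (if h : w ∈ t then f ⟨w, h⟩ else 0) • w)]
      exact Finset.sum_congr rfl fun i _ => by rw [dif_pos i.2, Subtype.coe_eta]
  rw [him]
  exact hemb.isClosedMap _ horth

lemma coneVec_isClosed (s : Finset E) : IsClosed (coneVec s) := by
  have he : coneVec s = ⋃ t ∈ Finset.filter
      (fun t => LinearIndependent ℝ (fun v : {x // x ∈ t} => (v : E))) s.powerset,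
      coneVec t := by
    apply Set.Subset.antisymm
    · intro x hx
      obtain ⟨t, hts, hind, hxt⟩ := coneVec_caratheodory s x hx
      exact Set.mem_biUnion (Finset.mem_filter.mpr ⟨Finset.mem_powerset.mpr hts, hind⟩) hxt
    · exact Set.iUnion₂_subset fun t ht =>
        coneVec_mono (Finset.mem_powerset.mp (Finset.mem_filter.mp ht).1)
  rw [he]
  exact (Finset.filter _ s.powerset).finite_toSet.isClosed_biUnion
    fun t ht => coneVec_isClosed_of_indep (Finset.mem_filter.mp ht).2

lemma coneInd_isClosed {ι : Type*} [Fintype ι] (v : ι → E) : IsClosed (coneInd v) := by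
  rw [coneInd_eq_coneVec]; exact coneVec_isClosed _

/-- norm bound from linear independence -/
lemma indep_sum_bound {t : Finset E}
    (h : LinearIndependent ℝ (fun v : {x // x ∈ t} => (v : E))) :
    ∃ c : ℝ, 0 ≤ c ∧ ∀ f : E → ℝ, (∀ w, 0 ≤ f w) →
      (∑ w ∈ t, f w) ≤ c * ‖∑ w ∈ t, f w • w‖ := by
  have hker : LinearMap.ker (combMap (E := E) t) = ⊥ := by
    rw [LinearMap.ker_eq_bot']
    intro f hf
    funext i
    exact Fintype.linearIndependent_iff.mp h f hf i
  have hinj : Function.Injective (combMap (E := E) t) := LinearMap.ker_eq_bot.mp hker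
  set T := combMap (E := E) t with hT
  let eqv := LinearEquiv.ofInjective T hinj
  let inv : (LinearMap.range T) →L[ℝ] ({x // x ∈ t} → ℝ) :=
    LinearMap.toContinuousLinearMap (eqv.symm : (LinearMap.range T) →ₗ[ℝ] _)
  refine ⟨(t.card : ℝ) * ‖inv‖, by positivity, ?_⟩
  intro f hf
  set μ : {x // x ∈ t} → ℝ := fun i => f i with hμ
  have hTμ : T μ = ∑ w ∈ t, f w • w := Finset.sum_coe_sort t (fun w => f w • w)
  have hμle : ‖μ‖ ≤ ‖inv‖ * ‖T μ‖ := by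
    have he2 : μ = inv ⟨T μ, LinearMap.mem_range_self T μ⟩ := by
      have : (⟨T μ, LinearMap.mem_range_self T μ⟩ : LinearMap.range T) = eqv μ := by
        ext; exact (LinearEquiv.ofInjective_apply T μ).symm
      rw [this]
      simp only [inv, LinearMap.coe_toContinuousLinearMap', LinearEquiv.coe_coe]
      rw [LinearEquiv.symm_apply_apply]
    calc ‖μ‖ = ‖inv ⟨T μ, LinearMap.mem_range_self T μ⟩‖ := by rw [← he2]
      _ ≤ ‖inv‖ * ‖(⟨T μ, LinearMap.mem_range_self T μ⟩ : LinearMap.range T)‖ :=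
          inv.le_opNorm _
      _ = ‖inv‖ * ‖T μ‖ := rfl
  have hsum : (∑ w ∈ t, f w) = ∑ i : {x // x ∈ t}, μ i :=
    (Finset.sum_coe_sort t f).symm
  have hsum2 : (∑ i : {x // x ∈ t}, μ i) ≤ (t.card : ℝ) * ‖μ‖ := by
    have : ∀ i ∈ Finset.univ, μ i ≤ ‖μ‖ := fun i _ =>
      le_trans (le_abs_self _) (norm_le_pi_norm μ i)
    calc (∑ i : {x // x ∈ t}, μ i) ≤ Finset.univ.card • ‖μ‖ :=
          Finset.sum_le_card_nsmul _ _ _ this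
      _ = (t.card : ℝ) * ‖μ‖ := by
          rw [nsmul_eq_mul, Finset.card_univ, Fintype.card_coe]
  calc (∑ w ∈ t, f w) ≤ (t.card : ℝ) * ‖μ‖ := by rw [hsum]; exact hsum2
    _ ≤ (t.card : ℝ) * (‖inv‖ * ‖T μ‖) := by
        apply mul_le_mul_of_nonneg_left hμle (by positivity)
    _ = ((t.card : ℝ) * ‖inv‖) * ‖∑ w ∈ t, f w • w‖ := by rw [hTμ]; ring

/-- polar of a set -/
def polarSet (C : Set E) : Set E := {u | ∀ x ∈ C, ⟪u, x⟫ ≤ 0}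

lemma polarSet_antitone {C D : Set E} (h : C ⊆ D) : polarSet D ⊆ polarSet C :=
  fun u hu x hx => hu x (h hx)

lemma exists_projection {C : Set E} (hne : C.Nonempty) (hconv : Convex ℝ C)
    (hcl : IsClosed C) (x : E) :
    ∃ p ∈ C, ‖x - p‖ = Metric.infDist x C ∧ ∀ y ∈ C, ⟪x - p, y - p⟫ ≤ 0 := by
  obtain ⟨p, hp, hdist⟩ := exists_norm_eq_iInf_of_complete_convex hne hcl.isComplete hconv x
  have h2 := (norm_eq_iInf_iff_real_inner_le_zero hconv hp).mp hdist
  refine ⟨p, hp, ?_, h2⟩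
  rw [hdist, Metric.infDist_eq_iInf]
  exact iInf_congr fun w => (dist_eq_norm x (w : E)).symm

lemma polarSet_polarSet {C : Set E} (h0 : (0:E) ∈ C) (hconv : Convex ℝ C) (hcl : IsClosed C)
    (hsmul : ∀ (c : ℝ), 0 ≤ c → ∀ x ∈ C, c • x ∈ C) :
    polarSet (polarSet C) = C := by
  apply Set.Subset.antisymm
  · intro x hx
    by_contra hxC
    obtain ⟨p, hp, hnorm, hproj⟩ := exists_projection ⟨0, h0⟩ hconv hcl x
    set u := x - p with hu
    have hune : u ≠ 0 := by
      intro h0u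
      rw [sub_eq_zero] at h0u
      exact hxC (h0u ▸ hp)
    have hup : ⟪u, p⟫ = 0 := by
      have h1 := hproj 0 h0
      have h2 := hproj ((2:ℝ) • p) (hsmul 2 (by norm_num) p hp)
      rw [zero_sub, inner_neg_right] at h1
      have h3 : (2:ℝ) • p - p = p := by rw [two_smul]; abel
      rw [h3] at h2
      linarith
    have humem : u ∈ polarSet C := by
      intro y hy
      have h4 := hproj y hy
      rw [inner_sub_right] at h4
      linarith
    have h5 := hx u humem
    have hxu : ⟪u, x⟫ = ‖u‖^2 := by
      have h6 : ⟪u, x⟫ = ⟪u, u⟫ + ⟪u, p⟫ := by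
        rw [← inner_add_right]
        congr 1
        rw [hu]; abel
      rw [h6, hup, add_zero, real_inner_self_eq_norm_sq]
    rw [real_inner_comm] at h5
    have h7 : 0 < ‖u‖^2 := pow_pos (norm_pos_iff.mpr hune) 2
    linarith [hxu ▸ h5]
  · intro x hx u hu
    rw [real_inner_comm]
    exact hu x hx

lemma polarSet_coneInd {ι : Type*} [Fintype ι] (v : ι → E) :
    polarSet (coneInd v) = {u | ∀ i, ⟪u, v i⟫ ≤ 0} := by
  ext u
  constructor
  · intro hu i; exact hu (v i) (mem_coneInd_self v i)
  · rintro hu x ⟨f, hf, rfl⟩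
    rw [inner_sum]
    apply Finset.sum_nonpos
    intro i _
    rw [real_inner_smul_right]
    exact mul_nonpos_of_nonneg_of_nonpos (hf i) (hu i)

lemma coneInd_eq_polar {ι : Type*} [Fintype ι] (v : ι → E) :
    coneInd v = polarSet {u | ∀ i, ⟪u, v i⟫ ≤ 0} := by
  conv_lhs => rw [← polarSet_polarSet (zero_mem_coneInd v) (coneInd_convex v)
    (coneInd_isClosed v) (fun c hc x hx => coneInd_smul hc hx)]
  rw [polarSet_coneInd]

lemma ineqSet_isClosed {ι : Type*} [Fintype ι] (a : ι → E) :
    IsClosed {x : E | ∀ i, ⟪a i, x⟫ ≤ 0} := by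
  have he : {x : E | ∀ i, ⟪a i, x⟫ ≤ 0} = ⋂ i, {x | ⟪a i, x⟫ ≤ 0} := by
    ext x; simp [Set.mem_iInter]
  rw [he]
  exact isClosed_iInter fun i =>
    isClosed_le (Continuous.inner continuous_const continuous_id) continuous_const

lemma ineqSet_convex {ι : Type*} [Fintype ι] (a : ι → E) :
    Convex ℝ {x : E | ∀ i, ⟪a i, x⟫ ≤ 0} := by
  intro x hx y hy c b hc hb hcb
  intro i
  have h1 : ⟪a i, c • x + b • y⟫ = c * ⟪a i, x⟫ + b * ⟪a i, y⟫ := by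
    rw [inner_add_right, real_inner_smul_right, real_inner_smul_right]
  rw [h1]
  have := mul_nonpos_of_nonneg_of_nonpos hc (hx i)
  have := mul_nonpos_of_nonneg_of_nonpos hb (hy i)
  linarith

lemma univ_eq_coneInd : ∃ (k : ℕ) (w : Fin k → E), (Set.univ : Set E) = coneInd w := by
  classical
  set D := Module.finrank ℝ E with hD
  set b := Module.finBasis ℝ E with hb
  set v : (Fin D ⊕ Fin D) → E := Sum.elim (fun i => b i) (fun i => -(b i)) with hv
  have huniv : (Set.univ : Set E) = coneInd v := by
    apply Set.Subset.antisymm _ (Set.subset_univ _)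
    intro x _
    refine ⟨Sum.elim (fun i => max (b.repr x i) 0) (fun i => max (-(b.repr x i)) 0), ?_, ?_⟩
    · rintro (i | i) <;> exact le_max_right _ _
    · rw [Fintype.sum_sum_type]
      simp only [hv, Sum.elim_inl, Sum.elim_inr]
      have hterm : ∀ i, max (b.repr x i) 0 • b i + max (-(b.repr x i)) 0 • (-(b i))
          = (b.repr x i) • b i := by
        intro i
        rw [smul_neg, ← sub_eq_add_neg, ← sub_smul, max_zero_sub_max_neg_zero_eq_self]
      rw [← Finset.sum_add_distrib, Finset.sum_congr rfl (fun i _ => hterm i)]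
      exact (b.sum_repr x).symm
  obtain ⟨k, w, hw⟩ := coneInd_toFin v
  exact ⟨k, w, huniv.trans hw⟩

lemma sum_split3 {ι : Type*} [Fintype ι] (p : ι → ℝ) {M : Type*} [AddCommMonoid M]
    (F : ι → M) :
    ∑ i, F i = (∑ i ∈ Finset.univ.filter (fun i => 0 < p i), F i)
      + ((∑ i ∈ Finset.univ.filter (fun i => p i < 0), F i)
      + (∑ i ∈ Finset.univ.filter (fun i => p i = 0), F i)) := by
  classical
  rw [← Finset.sum_filter_add_sum_filter_not Finset.univ (fun i => 0 < p i) F]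
  congr 1
  rw [← Finset.sum_filter_add_sum_filter_not
    (Finset.univ.filter (fun i => ¬ 0 < p i)) (fun i => p i < 0) F]
  congr 1
  · apply Finset.sum_congr _ (fun _ _ => rfl)
    rw [Finset.filter_filter]
    apply Finset.ext
    intro i
    simp only [Finset.mem_filter, Finset.mem_univ, true_and]
    constructor
    · exact fun h => h.2
    · exact fun h => ⟨not_lt.mpr h.le, h⟩
  · apply Finset.sum_congr _ (fun _ _ => rfl)
    rw [Finset.filter_filter]
    apply Finset.ext
    intro i
    simp only [Finset.mem_filter, Finset.mem_univ, true_and]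
    constructor
    · rintro ⟨h1, h2⟩; exact le_antisymm (not_lt.mp h1) (not_lt.mp h2)
    · intro h; rw [h]; exact ⟨lt_irrefl 0, lt_irrefl 0⟩

/-- Double description step: intersecting a finitely generated cone with a halfspace. -/
lemma coneInd_inter_halfspace {ι : Type*} [Fintype ι] (v : ι → E) (a : E) :
    ∃ (k : ℕ) (w : Fin k → E), coneInd v ∩ {x | ⟪a, x⟫ ≤ 0} = coneInd w := by
  classical
  set p : ι → ℝ := fun i => ⟪a, v i⟫ with hp
  set W : (ι ⊕ ι × ι) → E := Sum.elim (fun i => if p i ≤ 0 then v i else 0)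
    (fun q => if 0 < p q.1 ∧ p q.2 < 0 then p q.1 • v q.2 - p q.2 • v q.1 else 0) with hW
  have key : coneInd v ∩ {x | ⟪a, x⟫ ≤ 0} = coneInd W := by
    apply Set.Subset.antisymm
    · -- hard direction
      rintro x ⟨⟨f, hf, rfl⟩, hax⟩
      set x := ∑ i, f i • v i with hx
      set P := Finset.univ.filter (fun i => 0 < p i) with hPdef
      set N := Finset.univ.filter (fun i : ι => p i < 0) with hNdef
      set Z := Finset.univ.filter (fun i : ι => p i = 0) with hZdef
      set S := ∑ i ∈ P, f i * p i with hSdef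
      set T := ∑ j ∈ N, f j * (-p j) with hTdef
      have hsplit : x = (∑ i ∈ P, f i • v i) + ((∑ i ∈ N, f i • v i) + (∑ i ∈ Z, f i • v i)) :=
        sum_split3 p (fun i => f i • v i)
      have haxval : ⟪a, x⟫ = S - T := by
        rw [hx, inner_sum]
        have h1 : ∀ i, ⟪a, f i • v i⟫ = f i * p i := by
          intro i; rw [real_inner_smul_right]
        rw [Finset.sum_congr rfl (fun i _ => h1 i), sum_split3 p (fun i => f i * p i)]
        have h2 : ∑ i ∈ Z, f i * p i = 0 := by
          apply Finset.sum_eq_zero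
          intro i hi
          rw [(Finset.mem_filter.mp hi).2, mul_zero]
        have h3 : ∑ i ∈ N, f i * p i = -T := by
          rw [hTdef, ← Finset.sum_neg_distrib]
          exact Finset.sum_congr rfl fun i _ => by ring
        rw [h2, h3, hSdef]
        ring
      have hS0 : 0 ≤ S := Finset.sum_nonneg fun i hi =>
        mul_nonneg (hf i) (Finset.mem_filter.mp hi).2.le
      have hST : S ≤ T := by
        have := hax
        rw [Set.mem_setOf_eq, haxval] at this
        linarith
      by_cases hS : S = 0
      · -- all coefficients on P vanish
        have hfP : ∀ i ∈ P, f i = 0 := by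
          intro i hi
          have hpos : ∀ j ∈ P, 0 ≤ f j * p j := fun j hj =>
            mul_nonneg (hf j) (Finset.mem_filter.mp hj).2.le
          have := (Finset.sum_eq_zero_iff_of_nonneg hpos).mp hS i hi
          have hpi := (Finset.mem_filter.mp hi).2
          exact by nlinarith [this]
        refine ⟨Sum.elim f 0, ?_, ?_⟩
        · rintro (i | q)
          · exact hf i
          · exact le_rfl
        · rw [Fintype.sum_sum_type]
          simp only [Sum.elim_inl, Sum.elim_inr, Pi.zero_apply, zero_smul, Finset.sum_const_zero, add_zero]
          rw [hsplit]
          have hPzero : ∑ i ∈ P, f i • v i = 0 := Finset.sum_eq_zero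
            fun i hi => by rw [hfP i hi, zero_smul]
          have hterm : ∀ i, f i • (if p i ≤ 0 then v i else 0)
              = if p i ≤ 0 then f i • v i else 0 := by
            intro i; split_ifs <;> simp
          simp only [hW, Sum.elim_inl]
          rw [Finset.sum_congr rfl fun i _ => hterm i, ← Finset.sum_filter]
          rw [hPzero, zero_add]
          have e1 : (Finset.univ.filter (fun i => p i ≤ 0)).filter (fun i => p i < 0) = N := by
            rw [Finset.filter_filter, hNdef]
            apply Finset.ext
            intro i
            simp only [Finset.mem_filter, Finset.mem_univ, true_and]
            exact ⟨fun h => h.2, fun h => ⟨h.le, h⟩⟩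
          have e2 : (Finset.univ.filter (fun i => p i ≤ 0)).filter (fun i => ¬ p i < 0) = Z := by
            rw [Finset.filter_filter, hZdef]
            apply Finset.ext
            intro i
            simp only [Finset.mem_filter, Finset.mem_univ, true_and]
            constructor
            · rintro ⟨h1, h2⟩; exact le_antisymm h1 (not_lt.mp h2)
            · intro h; rw [h]; exact ⟨le_rfl, lt_irrefl 0⟩
          rw [← Finset.sum_filter_add_sum_filter_not
            (Finset.univ.filter (fun i => p i ≤ 0)) (fun i => p i < 0) (fun i => f i • v i),
            e1, e2]
      · -- main case : 0 < S
        have hSpos : 0 < S := lt_of_le_of_ne hS0 (Ne.symm hS)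
        have hTpos : 0 < T := lt_of_lt_of_le hSpos hST
        have hST1 : S / T ≤ 1 := (div_le_one hTpos).mpr hST
        have hNT : ∑ j ∈ N, f j * p j = -T := by
          rw [hTdef, ← Finset.sum_neg_distrib]
          exact Finset.sum_congr rfl fun i _ => by ring
        set lam : (ι ⊕ ι × ι) → ℝ := Sum.elim
          (fun i => if p i < 0 then f i * (1 - S / T) else f i)
          (fun q => if 0 < p q.1 ∧ p q.2 < 0 then f q.1 * f q.2 / T else 0) with hlam
        refine ⟨lam, ?_, ?_⟩
        · rintro (i | q) <;> simp only [hlam, Sum.elim_inl, Sum.elim_inr]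
          · split_ifs
            · apply mul_nonneg (hf i); linarith
            · exact hf i
          · split_ifs with hq
            · exact div_nonneg (mul_nonneg (hf q.1) (hf q.2)) hTpos.le
            · exact le_rfl
        · rw [Fintype.sum_sum_type]
          have hinl : (∑ i : ι, lam (Sum.inl i) • W (Sum.inl i))
              = (∑ i ∈ N, (f i * (1 - S / T)) • v i) + ∑ i ∈ Z, f i • v i := by
            have hterm : ∀ i : ι, lam (Sum.inl i) • W (Sum.inl i)
                = (if p i < 0 then (f i * (1 - S/T)) • v i
                   else if p i = 0 then f i • v i else 0) := by
              intro i
              simp only [hlam, hW, Sum.elim_inl]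
              rcases lt_trichotomy (p i) 0 with h | h | h
              · rw [if_pos h, if_pos h.le, if_pos h]
              · rw [if_neg (by rw [h]; exact lt_irrefl 0), if_pos (le_of_eq h),
                  if_neg (by rw [h]; exact lt_irrefl 0), if_pos h]
              · rw [if_neg (by exact not_lt.mpr h.le), if_neg (not_le.mpr h),
                  if_neg (by exact not_lt.mpr h.le), if_neg (by exact ne_of_gt h), smul_zero]
            rw [Finset.sum_congr rfl fun i _ => hterm i,
              sum_split3 p (fun i => if p i < 0 then (f i * (1 - S/T)) • v i
                else if p i = 0 then f i • v i else (0:E))]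
            have hP0 : (∑ i ∈ P, (if p i < 0 then (f i * (1 - S/T)) • v i
                else if p i = 0 then f i • v i else (0:E))) = 0 := by
              apply Finset.sum_eq_zero
              intro i hi
              rw [hPdef] at hi
              have h := (Finset.mem_filter.mp hi).2
              rw [if_neg (by exact not_lt.mpr h.le), if_neg (by exact ne_of_gt h)]
            have hNe : (∑ i ∈ N, (if p i < 0 then (f i * (1 - S/T)) • v i
                else if p i = 0 then f i • v i else (0:E)))
                = ∑ i ∈ N, (f i * (1 - S/T)) • v i := by
              refine Finset.sum_congr rfl fun i hi => ?_
              rw [hNdef] at hi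
              rw [if_pos (Finset.mem_filter.mp hi).2]
            have hZe : (∑ i ∈ Z, (if p i < 0 then (f i * (1 - S/T)) • v i
                else if p i = 0 then f i • v i else (0:E)))
                = ∑ i ∈ Z, f i • v i := by
              refine Finset.sum_congr rfl fun i hi => ?_
              rw [hZdef] at hi
              have h := (Finset.mem_filter.mp hi).2
              rw [if_neg (by rw [h]; exact lt_irrefl 0), if_pos h]
            rw [hP0, hNe, hZe, zero_add]
          have hinr : (∑ q : ι × ι, lam (Sum.inr q) • W (Sum.inr q))
              = (∑ i ∈ N, ((S / T) * f i) • v i) + ∑ i ∈ P, f i • v i := by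
            have hterm : ∀ q : ι × ι, lam (Sum.inr q) • W (Sum.inr q)
                = if 0 < p q.1 ∧ p q.2 < 0
                  then (f q.1 * f q.2 / T) • (p q.1 • v q.2 - p q.2 • v q.1) else 0 := by
              intro q
              simp only [hlam, hW, Sum.elim_inr]
              split_ifs
              · rfl
              · rw [smul_zero]
            rw [Finset.sum_congr rfl fun q _ => hterm q, ← Finset.sum_filter]
            have hfilter : (Finset.univ.filter (fun q : ι × ι => 0 < p q.1 ∧ p q.2 < 0))
                = P ×ˢ N := by
              rw [hPdef, hNdef]
              apply Finset.ext
              intro q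
              simp only [Finset.mem_filter, Finset.mem_univ, true_and, Finset.mem_product]
            rw [hfilter, Finset.sum_product]
            have hterm2 : ∀ i ∈ P, (∑ j ∈ N, (f i * f j / T) • (p i • v j - p j • v i))
                = (∑ j ∈ N, ((f i * p i) * (f j / T)) • v j) + (f i) • v i := by
              intro i hi
              have hsum2 : (∑ j ∈ N, (f i * f j / T) • (p i • v j - p j • v i))
                  = (∑ j ∈ N, ((f i * p i) * (f j / T)) • v j)
                    - (∑ j ∈ N, ((f j * p j) * (f i / T)) • v i) := by
                rw [← Finset.sum_sub_distrib]
                refine Finset.sum_congr rfl fun j hj => ?_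
                rw [smul_sub, smul_smul, smul_smul]
                congr 2 <;> ring
              rw [hsum2]
              have h2 : (∑ j ∈ N, ((f j * p j) * (f i / T)) • v i) = (- f i) • v i := by
                rw [← Finset.sum_smul, ← Finset.sum_mul, hNT]
                congr 1
                field_simp
              rw [h2, neg_smul, sub_neg_eq_add]
            rw [Finset.sum_congr rfl hterm2, Finset.sum_add_distrib]
            congr 1
            rw [Finset.sum_comm]
            refine Finset.sum_congr rfl fun j hj => ?_
            rw [← Finset.sum_smul, ← Finset.sum_mul, ← hSdef]
            congr 1
            ring
          rw [hinl, hinr, hsplit]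
          have hN2 : (∑ i ∈ N, f i • v i)
              = (∑ i ∈ N, (f i * (1 - S / T)) • v i) + ∑ i ∈ N, ((S / T) * f i) • v i := by
            rw [← Finset.sum_add_distrib]
            refine Finset.sum_congr rfl fun i _ => ?_
            rw [← add_smul]
            congr 1
            ring
          rw [hN2]
          abel
    · -- easy direction
      apply coneInd_subset
      · exact ⟨zero_mem_coneInd v, by simp⟩
      · rintro y ⟨hy1, hy2⟩ z ⟨hz1, hz2⟩
        refine ⟨coneInd_add hy1 hz1, ?_⟩
        simp only [Set.mem_setOf_eq, inner_add_right]
        simp only [Set.mem_setOf_eq] at hy2 hz2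
        linarith
      · intro c hc y ⟨hy1, hy2⟩
        refine ⟨coneInd_smul hc hy1, ?_⟩
        simp only [Set.mem_setOf_eq, real_inner_smul_right]
        simp only [Set.mem_setOf_eq] at hy2
        exact mul_nonpos_of_nonneg_of_nonpos hc hy2
      · rintro (i | q)
        · simp only [hW, Sum.elim_inl]
          split_ifs with hpi
          · exact ⟨mem_coneInd_self v i, hpi⟩
          · exact ⟨zero_mem_coneInd v, by simp⟩
        · simp only [hW, Sum.elim_inr]
          split_ifs with hq
          · constructor
            · rw [sub_eq_add_neg, ← neg_smul]
              exact coneInd_add (coneInd_smul hq.1.le (mem_coneInd_self v q.2))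
                (coneInd_smul (by linarith [hq.2] : (0:ℝ) ≤ -p q.2) (mem_coneInd_self v q.1))
            · simp only [Set.mem_setOf_eq, inner_sub_right, real_inner_smul_right]
              have h0 : p q.1 * p q.2 - p q.2 * p q.1 = 0 := by ring
              exact le_of_eq h0
          · exact ⟨zero_mem_coneInd v, by simp⟩
  obtain ⟨k, w, hw⟩ := coneInd_toFin W
  exact ⟨k, w, key.trans hw⟩

/-- Minkowski: a cone given by finitely many linear inequalities is finitely generated. -/
lemma ineq_eq_coneInd {ι : Type*} [Fintype ι] (a : ι → E) (s : Finset ι) :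
    ∃ (k : ℕ) (w : Fin k → E), {x : E | ∀ i ∈ s, ⟪a i, x⟫ ≤ 0} = coneInd w := by
  classical
  induction s using Finset.induction_on with
  | empty =>
    obtain ⟨k, w, hw⟩ := univ_eq_coneInd (E := E)
    refine ⟨k, w, ?_⟩
    rw [← hw]
    apply Set.eq_univ_of_forall
    intro x
    simp
  | @insert j s hj IH =>
    obtain ⟨k, w, hw⟩ := IH
    obtain ⟨k', w', hw'⟩ := coneInd_inter_halfspace w (a j)
    refine ⟨k', w', ?_⟩
    rw [← hw', ← hw]
    ext x
    simp only [Set.mem_inter_iff, Set.mem_setOf_eq, Finset.mem_insert]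
    constructor
    · intro h
      exact ⟨fun i hi => h i (Or.inr hi), h j (Or.inl rfl)⟩
    · rintro ⟨h1, h2⟩ i (rfl | hi)
      · exact h2
      · exact h1 i hi

lemma ineq_eq_coneInd' {ι : Type*} [Fintype ι] (a : ι → E) :
    ∃ (k : ℕ) (w : Fin k → E), {x : E | ∀ i, ⟪a i, x⟫ ≤ 0} = coneInd w := by
  obtain ⟨k, w, hw⟩ := ineq_eq_coneInd a Finset.univ
  refine ⟨k, w, ?_⟩
  rw [← hw]
  ext x
  simp

/-- Weyl direction: every finitely generated cone has an inequality representation. -/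
lemma polyhedral_ineq_rep {k : ℕ} (v : Fin k → E) :
    ∃ (m : ℕ) (a : Fin m → E), coneInd v = {x : E | ∀ i, ⟪a i, x⟫ ≤ 0} := by
  obtain ⟨m, a, ha⟩ := ineq_eq_coneInd' (fun i : Fin k => v i)
  refine ⟨m, a, ?_⟩
  have hcomm : {u : E | ∀ i, ⟪u, v i⟫ ≤ 0} = {u : E | ∀ i, ⟪v i, u⟫ ≤ 0} := by
    ext u
    simp only [Set.mem_setOf_eq]
    constructor <;> intro h i <;> rw [real_inner_comm] <;> exact h i
  rw [coneInd_eq_polar v, hcomm, ha, polarSet_coneInd]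
  ext x
  simp only [Set.mem_setOf_eq]
  constructor <;> intro h i <;> rw [real_inner_comm] <;> exact h i

/-- Hoffman's error bound for a homogeneous system of linear inequalities. -/
lemma hoffman_ineq {ι : Type*} [Fintype ι] (a : ι → E) :
    ∃ K : ℝ, 0 < K ∧ ∀ x : E,
      Metric.infDist x {y : E | ∀ i, ⟪a i, y⟫ ≤ 0} ≤ K * ∑ i, max ⟪a i, x⟫ 0 := by
  classical
  set s0 : Finset E := Finset.image a Finset.univ with hs0
  set cC : Finset E → ℝ := fun t =>
    if h : LinearIndependent ℝ (fun v : {x // x ∈ t} => (v : E))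
    then (indep_sum_bound h).choose else 0 with hcC
  have hcC_nonneg : ∀ t, 0 ≤ cC t := by
    intro t
    rw [hcC]
    dsimp only
    split_ifs with h
    · exact (indep_sum_bound h).choose_spec.1
    · exact le_rfl
  set K := 1 + ∑ t ∈ s0.powerset, cC t with hK
  have hK_pos : 0 < K := by
    have := Finset.sum_nonneg (fun t (_ : t ∈ s0.powerset) => hcC_nonneg t)
    rw [hK]; linarith
  have hK_ge : ∀ t ∈ s0.powerset, cC t ≤ K := by
    intro t ht
    have h1 : cC t ≤ ∑ r ∈ s0.powerset, cC r :=
      Finset.single_le_sum (fun r _ => hcC_nonneg r) ht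
    rw [hK]; linarith
  refine ⟨K, hK_pos, ?_⟩
  intro x
  set R := ∑ i, max ⟪a i, x⟫ 0 with hRdef
  have hR0 : 0 ≤ R := Finset.sum_nonneg fun i _ => le_max_right _ _
  set P := {y : E | ∀ i, ⟪a i, y⟫ ≤ 0} with hPdef
  have hPcl : IsClosed P := ineqSet_isClosed a
  have hPconv : Convex ℝ P := ineqSet_convex a
  have hP0 : (0:E) ∈ P := fun i => by rw [inner_zero_right]
  obtain ⟨q, hq, hqn, hqproj⟩ := exists_projection ⟨0, hP0⟩ hPconv hPcl x
  set u := x - q with hu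
  by_cases hu0 : u = 0
  · rw [← hqn, hu0, norm_zero]
    exact mul_nonneg hK_pos.le hR0
  set Act : ι → Prop := fun i => ⟪a i, q⟫ = 0 with hAct
  have humem : u ∈ coneInd (fun i : {i // Act i} => a i) := by
    rw [coneInd_eq_polar]
    intro y hy
    have hy' : ∀ i, Act i → ⟪a i, y⟫ ≤ 0 := fun i hi => by
      have h1 := hy ⟨i, hi⟩
      rwa [real_inner_comm] at h1
    set B := Finset.univ.filter (fun i => 0 < ⟪a i, y⟫) with hB
    set ε : ℝ := (insert (1:ℝ) (B.image (fun i => -⟪a i, q⟫ / ⟪a i, y⟫))).min'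
      (Finset.insert_nonempty _ _) with hε
    have hεβ : ∀ i ∈ B, ε ≤ -⟪a i, q⟫ / ⟪a i, y⟫ := fun i hi =>
      Finset.min'_le _ _ (Finset.mem_insert_of_mem (Finset.mem_image_of_mem _ hi))
    have hεpos : 0 < ε := by
      rw [hε, Finset.lt_min'_iff]
      intro r hr
      rcases Finset.mem_insert.mp hr with rfl | hr
      · norm_num
      · obtain ⟨i, hiB, rfl⟩ := Finset.mem_image.mp hr
        have hiy := (Finset.mem_filter.mp hiB).2
        have hiq : ⟪a i, q⟫ < 0 := by
          rcases lt_or_eq_of_le (hq i) with h | h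
          · exact h
          · exact absurd hiy (not_lt.mpr (hy' i h))
        exact div_pos (by linarith) hiy
    have hqy : q + ε • y ∈ P := by
      intro i
      rw [inner_add_right, real_inner_smul_right]
      by_cases hyi : 0 < ⟪a i, y⟫
      · have hi : i ∈ B := Finset.mem_filter.mpr ⟨Finset.mem_univ i, hyi⟩
        have h2 := hεβ i hi
        rw [le_div_iff₀ hyi] at h2
        linarith
      · push_neg at hyi
        have h1 : ε * ⟪a i, y⟫ ≤ 0 := mul_nonpos_of_nonneg_of_nonpos hεpos.le hyi
        have h2 := hq i
        linarith
    have hproj2 := hqproj (q + ε • y) hqy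
    rw [add_sub_cancel_left, real_inner_smul_right] at hproj2
    nlinarith [hproj2, hεpos]
  have humem2 : u ∈ coneVec (Finset.image (fun i : {i // Act i} => a i) Finset.univ) := by
    rw [← coneInd_eq_coneVec]
    exact humem
  obtain ⟨t, hts, hind, hut⟩ := coneVec_caratheodory _ u humem2
  obtain ⟨f, hf, hueq⟩ := hut
  have htval : ∀ w ∈ t, ⟪w, q⟫ = 0 ∧ ∃ i, a i = w := by
    intro w hw
    obtain ⟨i, _, rfl⟩ := Finset.mem_image.mp (hts hw)
    exact ⟨i.2, ⟨i, rfl⟩⟩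
  have hsum_le : (∑ w ∈ t, f w) ≤ cC t * ‖u‖ := by
    have h1 := (indep_sum_bound hind).choose_spec.2 f hf
    rw [← hueq] at h1
    rw [hcC]
    dsimp only
    rw [dif_pos hind]
    exact h1
  have hnorm2 : ‖u‖^2 ≤ (∑ w ∈ t, f w) * R := by
    have h1 : ‖u‖^2 = ⟪u, u⟫ := (real_inner_self_eq_norm_sq u).symm
    have h2 : ⟪u, u⟫ = ∑ w ∈ t, f w * ⟪w, u⟫ := by
      nth_rewrite 1 [hueq]
      rw [sum_inner]
      exact Finset.sum_congr rfl fun w _ => real_inner_smul_left w u (f w)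
    have h3 : ∀ w ∈ t, f w * ⟪w, u⟫ ≤ f w * R := by
      intro w hw
      apply mul_le_mul_of_nonneg_left _ (hf w)
      obtain ⟨hwq, i, rfl⟩ := htval w hw
      have h4 : ⟪a i, u⟫ = ⟪a i, x⟫ - ⟪a i, q⟫ := inner_sub_right (a i) x q
      rw [h4, hwq, sub_zero]
      calc ⟪a i, x⟫ ≤ max ⟪a i, x⟫ 0 := le_max_left _ _
        _ ≤ R := Finset.single_le_sum (fun j (_ : j ∈ Finset.univ) => le_max_right ⟪a j, x⟫ 0)
            (Finset.mem_univ i)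
    calc ‖u‖^2 = ∑ w ∈ t, f w * ⟪w, u⟫ := by rw [h1, h2]
      _ ≤ ∑ w ∈ t, f w * R := Finset.sum_le_sum h3
      _ = (∑ w ∈ t, f w) * R := by rw [← Finset.sum_mul]
  have hts0 : t ∈ s0.powerset := by
    apply Finset.mem_powerset.mpr
    intro w hw
    obtain ⟨_, i, rfl⟩ := htval w hw
    exact Finset.mem_image_of_mem a (Finset.mem_univ i)
  have hKt : cC t ≤ K := hK_ge t hts0
  have hupos : 0 < ‖u‖ := norm_pos_iff.mpr hu0
  have hchain : ‖u‖^2 ≤ (cC t * ‖u‖) * R :=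
    le_trans hnorm2 (mul_le_mul_of_nonneg_right hsum_le hR0)
  rw [← hqn]
  have h6 : cC t * ‖u‖ * R ≤ (K * R) * ‖u‖ := by
    have h7 := mul_le_mul_of_nonneg_right hKt (mul_nonneg hupos.le hR0)
    calc cC t * ‖u‖ * R = cC t * (‖u‖ * R) := by ring
      _ ≤ K * (‖u‖ * R) := h7
      _ = (K * R) * ‖u‖ := by ring
  have h5 : ‖u‖ * ‖u‖ ≤ (K * R) * ‖u‖ := by
    have h8 := hchain
    rw [pow_two] at h8
    linarith [h6]
  calc ‖u‖ ≤ K * R := le_of_mul_le_mul_right h5 hupos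

lemma inner_le_norm_mul_infDist (c : E) {A : Set E} (hne : A.Nonempty)
    (hA : ∀ y ∈ A, ⟪c, y⟫ ≤ 0) (x : E) :
    max ⟪c, x⟫ 0 ≤ ‖c‖ * Metric.infDist x A := by
  have hd0 : 0 ≤ Metric.infDist x A := Metric.infDist_nonneg
  apply max_le _ (by positivity)
  by_cases hc : c = 0
  · rw [hc, inner_zero_left]; positivity
  have hcn : 0 < ‖c‖ := norm_pos_iff.mpr hc
  have h1 : ∀ p ∈ A, ⟪c, x⟫ / ‖c‖ ≤ dist x p := by
    intro p hp
    have h2 : ⟪c, x⟫ = ⟪c, x - p⟫ + ⟪c, p⟫ := by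
      rw [← inner_add_right]
      congr 1
      abel
    have h3 : ⟪c, x - p⟫ ≤ ‖c‖ * ‖x - p‖ := real_inner_le_norm c (x - p)
    have h4 := hA p hp
    rw [dist_eq_norm, div_le_iff₀ hcn]
    nlinarith [h2, h3, h4]
  have hnes : Nonempty A := hne.to_subtype
  have h5 : ⟪c, x⟫ / ‖c‖ ≤ Metric.infDist x A := by
    rw [Metric.infDist_eq_iInf]
    exact le_ciInf fun p => h1 p p.2
  exact (div_le_iff₀' hcn).mp h5

/-- Hoffman-type bound for the intersection of two finitely generated cones. -/
lemma hoffman_pair {A B : Set E}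
    (hA : ∃ (k : ℕ) (v : Fin k → E), A = coneInd v)
    (hB : ∃ (k : ℕ) (v : Fin k → E), B = coneInd v) :
    ∃ K : ℝ, 1 ≤ K ∧ ∀ x : E,
      Metric.infDist x (A ∩ B) ≤ K * (Metric.infDist x A + Metric.infDist x B) := by
  obtain ⟨kA, vA, rfl⟩ := hA
  obtain ⟨kB, vB, rfl⟩ := hB
  obtain ⟨mA, aA, hAeq⟩ := polyhedral_ineq_rep vA
  obtain ⟨mB, aB, hBeq⟩ := polyhedral_ineq_rep vB
  set e : (Fin mA ⊕ Fin mB) → E := Sum.elim aA aB with he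
  have hinter : coneInd vA ∩ coneInd vB = {x : E | ∀ i, ⟪e i, x⟫ ≤ 0} := by
    rw [hAeq, hBeq]
    ext x
    simp only [Set.mem_inter_iff, Set.mem_setOf_eq, he]
    constructor
    · rintro ⟨h1, h2⟩ (i | i)
      · exact h1 i
      · exact h2 i
    · intro h
      exact ⟨fun i => h (Sum.inl i), fun i => h (Sum.inr i)⟩
  obtain ⟨K0, hK0, hKb⟩ := hoffman_ineq e
  set MA := ∑ i, ‖aA i‖ with hMA
  set MB := ∑ i, ‖aB i‖ with hMB
  have hMA0 : 0 ≤ MA := Finset.sum_nonneg fun i _ => norm_nonneg _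
  have hMB0 : 0 ≤ MB := Finset.sum_nonneg fun i _ => norm_nonneg _
  refine ⟨1 + K0 * (MA + MB), by nlinarith [hK0, hMA0, hMB0], ?_⟩
  intro x
  have hAne : (coneInd vA).Nonempty := ⟨0, zero_mem_coneInd vA⟩
  have hBne : (coneInd vB).Nonempty := ⟨0, zero_mem_coneInd vB⟩
  have hdA0 : 0 ≤ Metric.infDist x (coneInd vA) := Metric.infDist_nonneg
  have hdB0 : 0 ≤ Metric.infDist x (coneInd vB) := Metric.infDist_nonneg
  have hsplit : (∑ i : Fin mA ⊕ Fin mB, max ⟪e i, x⟫ 0)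
      = (∑ i, max ⟪aA i, x⟫ 0) + (∑ i, max ⟪aB i, x⟫ 0) := by
    rw [Fintype.sum_sum_type]
    simp [he]
  have hbA : (∑ i, max ⟪aA i, x⟫ 0) ≤ MA * Metric.infDist x (coneInd vA) := by
    calc (∑ i, max ⟪aA i, x⟫ 0)
        ≤ ∑ i, ‖aA i‖ * Metric.infDist x (coneInd vA) := by
          apply Finset.sum_le_sum
          intro i _
          apply inner_le_norm_mul_infDist (aA i) hAne
          intro y hy
          rw [hAeq] at hy
          exact hy i
      _ = MA * Metric.infDist x (coneInd vA) := by rw [hMA, Finset.sum_mul]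
  have hbB : (∑ i, max ⟪aB i, x⟫ 0) ≤ MB * Metric.infDist x (coneInd vB) := by
    calc (∑ i, max ⟪aB i, x⟫ 0)
        ≤ ∑ i, ‖aB i‖ * Metric.infDist x (coneInd vB) := by
          apply Finset.sum_le_sum
          intro i _
          apply inner_le_norm_mul_infDist (aB i) hBne
          intro y hy
          rw [hBeq] at hy
          exact hy i
      _ = MB * Metric.infDist x (coneInd vB) := by rw [hMB, Finset.sum_mul]
  calc Metric.infDist x (coneInd vA ∩ coneInd vB)
      ≤ K0 * ∑ i : Fin mA ⊕ Fin mB, max ⟪e i, x⟫ 0 := by rw [hinter]; exact hKb x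
    _ = K0 * ((∑ i, max ⟪aA i, x⟫ 0) + (∑ i, max ⟪aB i, x⟫ 0)) := by rw [hsplit]
    _ ≤ K0 * ((MA * Metric.infDist x (coneInd vA)) + (MB * Metric.infDist x (coneInd vB))) :=
        mul_le_mul_of_nonneg_left (add_le_add hbA hbB) hK0.le
    _ ≤ (1 + K0 * (MA + MB)) * (Metric.infDist x (coneInd vA) + Metric.infDist x (coneInd vB)) := by
        nlinarith [mul_nonneg (mul_nonneg hK0.le hMA0) hdB0,
          mul_nonneg (mul_nonneg hK0.le hMB0) hdA0, hdA0, hdB0]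

end Aux


/-- A (convex polyhedral) cone in `ℝ^n`: nonnegative combinations of finitely many vectors. -/
def IsPolyhedralCone {n : ℕ} (C : Set (EuclideanSpace ℝ (Fin n))) : Prop :=
  ∃ (k : ℕ) (v : Fin k → EuclideanSpace ℝ (Fin n)),
    C = {x | ∃ lam : Fin k → ℝ, (∀ i, 0 ≤ lam i) ∧ x = ∑ i, lam i • v i}

/-- `F` is a face of the cone `C`. -/
def IsFaceOf {n : ℕ} (F C : Set (EuclideanSpace ℝ (Fin n))) : Prop :=
  F = C ∨ ∃ u : EuclideanSpace ℝ (Fin n),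
    (∀ x ∈ C, ⟪u, x⟫ ≤ 0) ∧ F = C ∩ {x | ⟪u, x⟫ = 0}

/-- The dimension of a cone: the dimension of its linear span. -/
noncomputable def coneDim {n : ℕ} (C : Set (EuclideanSpace ℝ (Fin n))) : ℕ :=
  Module.finrank ℝ (Submodule.span ℝ C)

/-- A facet of `C` is a face of dimension `dim C - 1`. -/
def IsFacetOf {n : ℕ} (σ C : Set (EuclideanSpace ℝ (Fin n))) : Prop :=
  IsFaceOf σ C ∧ coneDim σ + 1 = coneDim C

/-- The polar of a cone. -/
def polarCone {n : ℕ} (C : Set (EuclideanSpace ℝ (Fin n))) :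
    Set (EuclideanSpace ℝ (Fin n)) :=
  {u | ∀ x ∈ C, ⟪u, x⟫ ≤ 0}

/-- A complete polyhedral fan in `ℝ^n`. -/
def IsCompleteFan {n : ℕ} (𝓕 : Set (Set (EuclideanSpace ℝ (Fin n)))) : Prop :=
  𝓕.Finite ∧ (∀ C ∈ 𝓕, IsPolyhedralCone C) ∧
    (∀ C ∈ 𝓕, ∀ F, IsFaceOf F C → F ∈ 𝓕) ∧
    (∀ C ∈ 𝓕, ∀ C' ∈ 𝓕, IsFaceOf (C ∩ C') C ∧ IsFaceOf (C ∩ C') C') ∧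
    ⋃₀ 𝓕 = Set.univ

/-- Right-hand side of the toric differential inclusion given by `𝓕` and `δ`. -/
noncomputable def toricRHS {n : ℕ} (𝓕 : Set (Set (EuclideanSpace ℝ (Fin n))))
    (δ : ℝ) (X : EuclideanSpace ℝ (Fin n)) : Set (EuclideanSpace ℝ (Fin n)) :=
  polarCone (⋂₀ {C | C ∈ 𝓕 ∧ Metric.infDist X C ≤ δ})

/-- The quasi-toric differential inclusion given by `𝓕` and `d` is well-defined. -/
def QTDIWellDefined {n : ℕ} (𝓕 : Set (Set (EuclideanSpace ℝ (Fin n))))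
    (d : Fin n → ℝ) : Prop :=
  ∀ C ∈ 𝓕, ∀ C' ∈ 𝓕, ∀ X : EuclideanSpace ℝ (Fin n),
    ∀ (hk : coneDim C < n) (hm : coneDim C' < n),
      Metric.infDist X C ≤ d ⟨coneDim C, hk⟩ →
      Metric.infDist X C' ≤ d ⟨coneDim C', hm⟩ →
      ∃ hh : coneDim (C ∩ C') < n,
        Metric.infDist X (C ∩ C') ≤ d ⟨coneDim (C ∩ C'), hh⟩


section Fan

variable {n : ℕ}

lemma isPolyhedral_coneInd {C : Set (EuclideanSpace ℝ (Fin n))} (h : IsPolyhedralCone C) :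
    ∃ (k : ℕ) (v : Fin k → EuclideanSpace ℝ (Fin n)), C = coneInd v := h

lemma IsPolyhedralCone.zero_mem {C : Set (EuclideanSpace ℝ (Fin n))}
    (h : IsPolyhedralCone C) : (0 : EuclideanSpace ℝ (Fin n)) ∈ C := by
  obtain ⟨k, v, rfl⟩ := h
  exact zero_mem_coneInd v

lemma coneDim_mono {C D : Set (EuclideanSpace ℝ (Fin n))} (h : C ⊆ D) :
    coneDim C ≤ coneDim D :=
  Submodule.finrank_mono (Submodule.span_mono h)

lemma face_dim_lt {F C : Set (EuclideanSpace ℝ (Fin n))} (hf : IsFaceOf F C)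
    (hne : F ≠ C) : F ⊆ C ∧ coneDim F < coneDim C := by
  rcases hf with rfl | ⟨u, hu, rfl⟩
  · exact absurd rfl hne
  refine ⟨Set.inter_subset_left, ?_⟩
  have hnotsub : ¬ C ⊆ C ∩ {x | ⟪u, x⟫ = 0} := by
    intro hsub
    exact hne (Set.Subset.antisymm Set.inter_subset_left hsub)
  obtain ⟨x, hxC, hxF⟩ := Set.not_subset.mp hnotsub
  have hux : ⟪u, x⟫ ≠ 0 := by
    intro h0
    exact hxF ⟨hxC, h0⟩
  set φ : EuclideanSpace ℝ (Fin n) →L[ℝ] ℝ := innerSL ℝ u with hφ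
  have hspanF : Submodule.span ℝ (C ∩ {x | ⟪u, x⟫ = 0}) ≤ LinearMap.ker (φ : _ →ₗ[ℝ] ℝ) := by
    apply Submodule.span_le.mpr
    rintro y ⟨_, hy⟩
    exact hy
  have hlt : Submodule.span ℝ (C ∩ {x | ⟪u, x⟫ = 0}) < Submodule.span ℝ C := by
    apply lt_of_le_of_ne (Submodule.span_mono Set.inter_subset_left)
    intro heq
    have hxspan : x ∈ Submodule.span ℝ (C ∩ {x | ⟪u, x⟫ = 0}) := by
      rw [heq]
      exact Submodule.subset_span hxC
    exact hux (hspanF hxspan)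
  exact Submodule.finrank_lt_finrank_of_lt hlt

end Fan

theorem toric_embeds_into_quasiToric {n : ℕ}
    (𝓕 : Set (Set (EuclideanSpace ℝ (Fin n)))) (h𝓕 : IsCompleteFan 𝓕)
    (δ : ℝ) (hδ : 0 < δ) :
    ∃ d : Fin n → ℝ, (∀ k, 0 < d k) ∧ QTDIWellDefined 𝓕 d ∧
      ∀ X : EuclideanSpace ℝ (Fin n), ∀ C ∈ 𝓕,
        ((∃ hl : coneDim C < n,
            Metric.infDist X C ≤ d ⟨coneDim C, hl⟩ ∧
            ∀ C' ∈ 𝓕, ∀ h' : coneDim C' < coneDim C,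
              d ⟨coneDim C', h'.trans hl⟩ < Metric.infDist X C') ∨
         (coneDim C = n ∧ X ∈ C ∧
            ∀ C' ∈ 𝓕, ∀ h' : coneDim C' < n,
              d ⟨coneDim C', h'⟩ < Metric.infDist X C')) →
        toricRHS 𝓕 δ X ⊆ polarCone C := by
  classical
  obtain ⟨hfin, hpoly, hfaceclosed, hfacepair, hcover⟩ := h𝓕
  -- a uniform Hoffman constant for all pairs of cones in the fan
  obtain ⟨K, hK1, hKbound⟩ : ∃ K : ℝ, 1 ≤ K ∧ ∀ C ∈ 𝓕, ∀ C' ∈ 𝓕,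
      ∀ x : EuclideanSpace ℝ (Fin n), Metric.infDist x (C ∩ C')
        ≤ K * (Metric.infDist x C + Metric.infDist x C') := by
    set Fs := hfin.toFinset with hFs
    have hchoice : ∀ p : Set (EuclideanSpace ℝ (Fin n)) × Set (EuclideanSpace ℝ (Fin n)),
        ∃ K : ℝ, 1 ≤ K ∧ ((p.1 ∈ 𝓕 ∧ p.2 ∈ 𝓕) →
          ∀ x : EuclideanSpace ℝ (Fin n), Metric.infDist x (p.1 ∩ p.2)
            ≤ K * (Metric.infDist x p.1 + Metric.infDist x p.2)) := by
      intro p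
      by_cases hp : p.1 ∈ 𝓕 ∧ p.2 ∈ 𝓕
      · obtain ⟨K, hKone, hKb⟩ :=
          hoffman_pair (isPolyhedral_coneInd (hpoly p.1 hp.1))
            (isPolyhedral_coneInd (hpoly p.2 hp.2))
        exact ⟨K, hKone, fun _ => hKb⟩
      · exact ⟨1, le_rfl, fun h => absurd h hp⟩
    choose g hg1 hg2 using hchoice
    refine ⟨1 + ∑ p ∈ Fs ×ˢ Fs, max (g p) 0, ?_, ?_⟩
    · have := Finset.sum_nonneg
        (fun (p : Set (EuclideanSpace ℝ (Fin n)) × Set (EuclideanSpace ℝ (Fin n)))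
          (_ : p ∈ Fs ×ˢ Fs) => le_max_right (g p) 0)
      linarith
    · intro C hC C' hC' x
      have hpmem : (C, C') ∈ Fs ×ˢ Fs := by
        rw [Finset.mem_product]
        exact ⟨hfin.mem_toFinset.mpr hC, hfin.mem_toFinset.mpr hC'⟩
      have hgle : g (C, C') ≤ 1 + ∑ p ∈ Fs ×ˢ Fs, max (g p) 0 := by
        have h1 : max (g (C, C')) 0 ≤ ∑ p ∈ Fs ×ˢ Fs, max (g p) 0 :=
          Finset.single_le_sum (fun p _ => le_max_right (g p) 0) hpmem
        have h2 : g (C, C') ≤ max (g (C, C')) 0 := le_max_left _ _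
        linarith
      have hs0 : 0 ≤ Metric.infDist x C + Metric.infDist x C' := by
        have := Metric.infDist_nonneg (x := x) (s := C)
        have := Metric.infDist_nonneg (x := x) (s := C')
        linarith
      calc Metric.infDist x (C ∩ C')
          ≤ g (C, C') * (Metric.infDist x C + Metric.infDist x C') := hg2 (C, C') ⟨hC, hC'⟩ x
        _ ≤ (1 + ∑ p ∈ Fs ×ˢ Fs, max (g p) 0) * (Metric.infDist x C + Metric.infDist x C') :=
            mul_le_mul_of_nonneg_right hgle hs0
  have hKpos : 0 < K := lt_of_lt_of_le one_pos hK1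
  -- the thresholds
  set Dn : ℕ → ℝ := fun i => (3*K)^(n-i) * δ with hDn
  have h3K : (1:ℝ) ≤ 3*K := by linarith
  have h3Kpos : (0:ℝ) < 3*K := by linarith
  have hDnpos : ∀ i, 0 < Dn i := fun i => mul_pos (pow_pos h3Kpos _) hδ
  have hmono : ∀ i j : ℕ, i ≤ j → Dn j ≤ Dn i := by
    intro i j hij
    apply mul_le_mul_of_nonneg_right _ hδ.le
    exact pow_le_pow_right₀ h3K (Nat.sub_le_sub_left hij n)
  have hstep : ∀ i : ℕ, i < n → Dn i = 3*K*Dn (i+1) := by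
    intro i hi
    show (3*K)^(n-i) * δ = 3*K*((3*K)^(n-(i+1)) * δ)
    have he : n - i = (n - (i+1)) + 1 := by omega
    rw [he, pow_succ]
    ring
  have hdelta_le : ∀ i, δ ≤ Dn i := by
    intro i
    have h1 : (1:ℝ) ≤ (3*K)^(n-i) := by
      have := pow_le_pow_right₀ h3K (Nat.zero_le (n-i))
      rwa [pow_zero] at this
    have h2 := mul_le_mul_of_nonneg_right h1 hδ.le
    rw [one_mul] at h2
    exact h2
  set d : Fin n → ℝ := fun k => Dn (k : ℕ) with hd
  -- the key geometric fact
  have hCD : ∀ X : EuclideanSpace ℝ (Fin n), ∀ C ∈ 𝓕,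
      ((∃ hl : coneDim C < n,
          Metric.infDist X C ≤ d ⟨coneDim C, hl⟩ ∧
          ∀ C' ∈ 𝓕, ∀ h' : coneDim C' < coneDim C,
            d ⟨coneDim C', h'.trans hl⟩ < Metric.infDist X C') ∨
       (coneDim C = n ∧ X ∈ C ∧
          ∀ C' ∈ 𝓕, ∀ h' : coneDim C' < n,
            d ⟨coneDim C', h'⟩ < Metric.infDist X C')) →
      ∀ D ∈ 𝓕, Metric.infDist X D ≤ δ → C ⊆ D := by
    intro X C hC hyp D hD hdist
    have hface := (hfacepair C hC D hD).1
    by_cases he : C ∩ D = C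
    · exact Set.inter_eq_left.mp he
    exfalso
    obtain ⟨hsub, hlt⟩ := face_dim_lt hface he
    have hmem : C ∩ D ∈ 𝓕 := hfaceclosed C hC (C ∩ D) hface
    have hbound := hKbound C hC D hD X
    rcases hyp with ⟨hl, hdistC, hfar⟩ | ⟨hdim, hXC, hfar⟩
    · have hfar' := hfar (C ∩ D) hmem hlt
      have hh1 : coneDim (C ∩ D) + 1 ≤ coneDim C := hlt
      have e1 : Dn (coneDim C) ≤ Dn (coneDim (C ∩ D) + 1) := hmono _ _ hh1
      have e2 : δ ≤ Dn (coneDim C) := hdelta_le _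
      have e3 : Dn (coneDim (C ∩ D)) = 3*K*Dn (coneDim (C ∩ D) + 1) :=
        hstep _ (lt_trans hlt hl)
      have e4 : Metric.infDist X (C ∩ D) ≤ K * (Dn (coneDim C) + δ) := by
        refine le_trans hbound ?_
        apply mul_le_mul_of_nonneg_left _ hKpos.le
        exact add_le_add hdistC hdist
      have e5 : 0 ≤ K * Dn (coneDim (C ∩ D) + 1) :=
        mul_nonneg hKpos.le (hDnpos _).le
      have hfar2 : Dn (coneDim (C ∩ D)) < Metric.infDist X (C ∩ D) := hfar'
      nlinarith [hfar2, e4, e1, e2, e3, e5]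
    · have hlt' : coneDim (C ∩ D) < n := lt_of_lt_of_le hlt (le_of_eq hdim)
      have hfar' := hfar (C ∩ D) hmem hlt'
      have hX0 : Metric.infDist X C = 0 := Metric.infDist_zero_of_mem hXC
      have e2 : δ ≤ Dn (coneDim (C ∩ D) + 1) := hdelta_le _
      have e3 : Dn (coneDim (C ∩ D)) = 3*K*Dn (coneDim (C ∩ D) + 1) := hstep _ hlt'
      have e4 : Metric.infDist X (C ∩ D) ≤ K * δ := by
        refine le_trans hbound ?_
        rw [hX0, zero_add]
        exact mul_le_mul_of_nonneg_left hdist hKpos.le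
      have e5 : 0 ≤ K * Dn (coneDim (C ∩ D) + 1) :=
        mul_nonneg hKpos.le (hDnpos _).le
      have hfar2 : Dn (coneDim (C ∩ D)) < Metric.infDist X (C ∩ D) := hfar'
      nlinarith [hfar2, e4, e2, e3, e5]
  refine ⟨d, fun k => hDnpos _, ?_, ?_⟩
  · -- well-definedness
    intro C hC C' hC' X hk hm h1 h2
    have hhle : coneDim (C ∩ C') ≤ coneDim C := coneDim_mono Set.inter_subset_left
    refine ⟨lt_of_le_of_lt hhle hk, ?_⟩
    by_cases he1 : C ∩ C' = C
    · have hi1 : Metric.infDist X (C ∩ C') = Metric.infDist X C := by rw [he1]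
      have hcd1 : coneDim (C ∩ C') = coneDim C := by rw [he1]
      show Metric.infDist X (C ∩ C') ≤ Dn (coneDim (C ∩ C'))
      rw [hi1, hcd1]
      exact h1
    by_cases he2 : C ∩ C' = C'
    · have hi2 : Metric.infDist X (C ∩ C') = Metric.infDist X C' := by rw [he2]
      have hcd2 : coneDim (C ∩ C') = coneDim C' := by rw [he2]
      show Metric.infDist X (C ∩ C') ≤ Dn (coneDim (C ∩ C'))
      rw [hi2, hcd2]
      exact h2
    have hd1 := (face_dim_lt (hfacepair C hC C' hC').1 he1).2
    have hd2 := (face_dim_lt (hfacepair C hC C' hC').2 he2).2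
    have hstep' : Dn (coneDim (C ∩ C')) = 3*K*Dn (coneDim (C ∩ C') + 1) :=
      hstep _ (lt_trans hd1 hk)
    have e1 : Dn (coneDim C) ≤ Dn (coneDim (C ∩ C') + 1) := hmono _ _ hd1
    have e2 : Dn (coneDim C') ≤ Dn (coneDim (C ∩ C') + 1) := hmono _ _ hd2
    have e5 : 0 ≤ K * Dn (coneDim (C ∩ C') + 1) := mul_nonneg hKpos.le (hDnpos _).le
    have hbound := hKbound C hC C' hC' X
    have h1' : Metric.infDist X C ≤ Dn (coneDim C) := h1
    have h2' : Metric.infDist X C' ≤ Dn (coneDim C') := h2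
    show Metric.infDist X (C ∩ C') ≤ Dn (coneDim (C ∩ C'))
    nlinarith [hbound, h1', h2', e1, e2, e5, hstep', hKpos]
  · -- embedding
    intro X C hC hyp u hu
    intro x hx
    apply hu
    intro D hD
    obtain ⟨hD𝓕, hDdist⟩ := hD
    exact hCD X C hC hyp D hD𝓕 hDdist hx
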